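/- arXiv:2003.13363 — 3 statements merged into one kernel-verified Lean document; each statement's English description precedes it below -/
import Mathlib

section
/- Let θc ∈ (0, π/2), let α : ℝ → ℝ be a locally Lipschitz, strictly increasing function with α(0) = 0 (an extended class-K function), and let ω : ℝ → ℝ³ be Lipschitz continuous. Let R : ℝ → M₃(ℝ) be a differentiable curve with R(t) ∈ SO(3) for all t, satisfying the attitude kinematics Ṙ(t) = R(t)·ω̂(t). Suppose that for all t ≥ 0 the condition −e₃ᵀ R(t) ê₃ ω(t) + α(e₃ᵀ R(t) e₃ − cos θc) ≥ 0 holds. If e₃ᵀ R(0) e₃ ≥ cos θc, then e₃ᵀ R(t) e₃ ≥ cos θc for all t ≥ 0 (i.e., the conic constraint set C_o = {R ∈ SO(3) : e₃ᵀ R e₃ ≥ cos θc} is forward invariant). -/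
open Matrix

/-- The hat map: `hatMap a` is the skew-symmetric matrix with `(hatMap a) *ᵥ b = a ×₃ b`. -/
noncomputable def hatMap (a : Fin 3 → ℝ) : Matrix (Fin 3) (Fin 3) ℝ :=
  !![0, -a 2, a 1; a 2, 0, -a 0; -a 1, a 0, 0]

/-- The third standard basis vector `e₃ = (0,0,1)ᵀ`. -/
def e3 : Fin 3 → ℝ := ![0, 0, 1]

/-- `SO3 R` means `R` is a rotation matrix: `RᵀR = I` and `det R = 1`. -/
def SO3 (R : Matrix (Fin 3) (Fin 3) ℝ) : Prop := Rᵀ * R = 1 ∧ R.det = 1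

lemma e3_eval (M : Matrix (Fin 3) (Fin 3) ℝ) : e3 ⬝ᵥ M *ᵥ e3 = M 2 2 := by
  simp [e3, dotProduct, mulVec, Fin.sum_univ_three]

/-- Forward invariance of the conic constraint set `{R ∈ SO(3) : e₃ᵀ R e₃ ≥ cos θc}`
under the ZCBF condition `-e₃ᵀ R ê₃ ω + α(e₃ᵀ R e₃ - cos θc) ≥ 0`. -/
theorem stmt0
    (θc : ℝ) (hθc : θc ∈ Set.Ioo 0 (Real.pi / 2))
    (α : ℝ → ℝ) (hα_lip : LocallyLipschitz α) (hα_mono : StrictMono α) (hα0 : α 0 = 0)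
    (ω : ℝ → Fin 3 → ℝ) (hω : ∃ K, LipschitzWith K ω)
    (R : ℝ → Matrix (Fin 3) (Fin 3) ℝ)
    (hSO3 : ∀ t, SO3 (R t))
    (hdyn : ∀ t, ∀ i j, HasDerivAt (fun s => R s i j) ((R t * hatMap (ω t)) i j) t)
    (hcond : ∀ t ≥ (0 : ℝ),
      -(e3 ⬝ᵥ (R t * hatMap e3) *ᵥ (ω t)) + α (e3 ⬝ᵥ (R t) *ᵥ e3 - Real.cos θc) ≥ 0)
    (hinit : e3 ⬝ᵥ (R 0) *ᵥ e3 ≥ Real.cos θc) :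
    ∀ t ≥ (0 : ℝ), e3 ⬝ᵥ (R t) *ᵥ e3 ≥ Real.cos θc := by
  intro t₁ ht₁
  rw [e3_eval] at hinit ⊢
  by_contra hneg
  push_neg at hneg
  set c := Real.cos θc with hc
  -- derivative of the barrier function
  have hderiv : ∀ t, HasDerivAt (fun s => R s 2 2)
      (R t 2 0 * ω t 1 - R t 2 1 * ω t 0) t := by
    intro t
    have h := hdyn t 2 2
    have : (R t * hatMap (ω t)) 2 2 = R t 2 0 * ω t 1 - R t 2 1 * ω t 0 := by
      simp [Matrix.mul_apply, Fin.sum_univ_three, hatMap]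
      ring
    rwa [this] at h
  -- the ZCBF condition gives derivative positivity where the barrier is negative
  have hpos : ∀ t ≥ (0:ℝ), R t 2 2 < c → 0 < R t 2 0 * ω t 1 - R t 2 1 * ω t 0 := by
    intro t ht hlt
    have h := hcond t ht
    rw [e3_eval] at h
    have hdot : e3 ⬝ᵥ (R t * hatMap e3) *ᵥ (ω t)
        = R t 2 1 * ω t 0 - R t 2 0 * ω t 1 := by
      simp [e3, dotProduct, mulVec, Matrix.mul_apply, Fin.sum_univ_three, hatMap]
      ring
    rw [hdot] at h
    have hαneg : α (R t 2 2 - c) < 0 := by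
      have := hα_mono (show R t 2 2 - c < 0 by linarith)
      rwa [hα0] at this
    linarith
  have hcont : Continuous (fun t => R t 2 2) :=
    continuous_iff_continuousAt.mpr fun t => (hdyn t 2 2).continuousAt
  -- set of times in [0, t₁] where the barrier is satisfied
  set S : Set ℝ := Set.Icc 0 t₁ ∩ {t | c ≤ R t 2 2} with hS
  have hSclosed : IsClosed S := isClosed_Icc.inter (isClosed_le continuous_const hcont)
  have hSne : S.Nonempty := ⟨0, ⟨le_refl 0, ht₁⟩, hinit⟩
  have hSbdd : BddAbove S := ⟨t₁, fun x hx => hx.1.2⟩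
  set s := sSup S with hs
  have hsmem : s ∈ S := hSclosed.csSup_mem hSne hSbdd
  have hs0 : 0 ≤ s := hsmem.1.1
  have hst : s ≤ t₁ := hsmem.1.2
  have hsc : c ≤ R s 2 2 := hsmem.2
  have hslt : s < t₁ := lt_of_le_of_ne hst (fun h => by rw [h] at hsc; linarith)
  -- on (s, t₁) the barrier is negative, hence the derivative is positive
  have hmono : StrictMonoOn (fun t => R t 2 2) (Set.Icc s t₁) := by
    apply strictMonoOn_of_deriv_pos (convex_Icc s t₁) hcont.continuousOn
    intro x hx
    rw [interior_Icc] at hx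
    have hx0 : (0:ℝ) ≤ x := le_of_lt (lt_of_le_of_lt hs0 hx.1)
    have hxlt : R x 2 2 < c := by
      by_contra hge
      push_neg at hge
      have : x ∈ S := ⟨⟨hx0, le_of_lt hx.2⟩, hge⟩
      exact absurd (le_csSup hSbdd this) (not_le.mpr hx.1)
    rw [(hderiv x).deriv]
    exact hpos x hx0 hxlt
  have := hmono (Set.left_mem_Icc.mpr (le_of_lt hslt))
    (Set.right_mem_Icc.mpr (le_of_lt hslt)) hslt
  simp only at this
  linarith
end

section
/- Let θc ∈ (0, π/2), let α : ℝ → ℝ be a locally Lipschitz, strictly increasing function with α(0) = 0 (an extended class-K function), and let ω : ℝ → ℝ³ be Lipschitz continuous. Let R : ℝ → M₃(ℝ) be a differentiable curve with R(t) ∈ SO(3) for all t, satisfying the attitude kinematics Ṙ(t) = R(t)·ω̂(t). Suppose that for all t ≥ 0 the condition e₃ᵀ R(t) ê₃ ω(t) − α(e₃ᵀ R(t) e₃ − cos θc) ≥ 0 holds. If e₃ᵀ R(0) e₃ ≤ cos θc, then e₃ᵀ R(t) e₃ ≤ cos θc for all t ≥ 0 (i.e., the exterior conic constraint set {R ∈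 SO(3) : e₃ᵀ R e₃ ≤ cos θc} is forward invariant). -/
/-- Invariance of a sublevel set for a differentiable function whose derivative is
nonpositive whenever the function is at or above the level. -/
lemma sublevel_invariant (f g : ℝ → ℝ) (c : ℝ)
    (hderiv : ∀ t, HasDerivAt f (g t) t)
    (hg : ∀ t ≥ (0 : ℝ), c ≤ f t → g t ≤ 0)
    (h0 : f 0 ≤ c) : ∀ t ≥ (0 : ℝ), f t ≤ c := by
  intro t₁ ht₁
  by_contra hgt
  push_neg at hgt
  have hcont : Continuous f := by
    apply continuous_iff_continuousAt.mpr
    exact fun t => (hderiv t).continuousAt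
  set S : Set ℝ := Set.Icc 0 t₁ ∩ f ⁻¹' (Set.Iic c) with hS
  have hSne : S.Nonempty := ⟨0, ⟨le_refl 0, ht₁⟩, h0⟩
  have hSbdd : BddAbove S := BddAbove.mono Set.inter_subset_left (bddAbove_Icc)
  have hSclosed : IsClosed S :=
    IsClosed.inter isClosed_Icc (IsClosed.preimage hcont isClosed_Iic)
  have ht₀S : sSup S ∈ S := hSclosed.csSup_mem hSne hSbdd
  obtain ⟨t₀, hT⟩ : ∃ t₀, sSup S = t₀ := ⟨sSup S, rfl⟩
  rw [hT] at ht₀S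
  have ht₀0 : (0:ℝ) ≤ t₀ := ht₀S.1.1
  have ht₀t₁ : t₀ ≤ t₁ := ht₀S.1.2
  have ht₀f : f t₀ ≤ c := ht₀S.2
  have ht₀lt : t₀ < t₁ := lt_of_le_of_ne ht₀t₁ (by
    rintro rfl
    exact absurd hgt (not_lt.mpr ht₀f))
  have hpos : ∀ s ∈ Set.Ioo t₀ t₁, c < f s := by
    intro s hs
    by_contra hle
    push_neg at hle
    have hsS : s ∈ S := ⟨⟨le_trans ht₀0 hs.1.le, hs.2.le⟩, hle⟩
    exact absurd (hT ▸ le_csSup hSbdd hsS) (not_le.mpr hs.1)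
  have hanti : AntitoneOn f (Set.Icc t₀ t₁) := by
    apply antitoneOn_of_deriv_nonpos (convex_Icc t₀ t₁) hcont.continuousOn
    · intro x hx
      exact (hderiv x).differentiableAt.differentiableWithinAt
    · intro x hx
      rw [interior_Icc] at hx
      rw [(hderiv x).deriv]
      exact hg x (le_trans ht₀0 hx.1.le) (hpos x hx).le
  have := hanti ⟨le_refl t₀, ht₀t₁⟩ ⟨ht₀lt.le, le_refl t₁⟩ ht₀lt.le
  linarith


open Matrix

/-- Forward invariance of the exterior conic constraint set `{R ∈ SO(3) : e₃ᵀ R e₃ ≤ cos θc}`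
under the ZCBF condition `e₃ᵀ R ê₃ ω - α(e₃ᵀ R e₃ - cos θc) ≥ 0`. -/
theorem stmt1
    (θc : ℝ) (hθc : θc ∈ Set.Ioo 0 (Real.pi / 2))
    (α : ℝ → ℝ) (hα_lip : LocallyLipschitz α) (hα_mono : StrictMono α) (hα0 : α 0 = 0)
    (ω : ℝ → Fin 3 → ℝ) (hω : ∃ K, LipschitzWith K ω)
    (R : ℝ → Matrix (Fin 3) (Fin 3) ℝ)
    (hSO3 : ∀ t, SO3 (R t))
    (hdyn : ∀ t, ∀ i j, HasDerivAt (fun s => R s i j) ((R t * hatMap (ω t)) i j) t)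
    (hcond : ∀ t ≥ (0 : ℝ),
      e3 ⬝ᵥ (R t * hatMap e3) *ᵥ (ω t) - α (e3 ⬝ᵥ (R t) *ᵥ e3 - Real.cos θc) ≥ 0)
    (hinit : e3 ⬝ᵥ (R 0) *ᵥ e3 ≤ Real.cos θc) :
    ∀ t ≥ (0 : ℝ), e3 ⬝ᵥ (R t) *ᵥ e3 ≤ Real.cos θc := by
  set c := Real.cos θc with hc
  have hf : ∀ t, e3 ⬝ᵥ (R t) *ᵥ e3 = R t 2 2 := by
    intro t
    simp [e3, dotProduct, mulVec, Fin.sum_univ_three]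
  have hderiv : ∀ t, HasDerivAt (fun s => R s 2 2)
      (R t 2 0 * ω t 1 - R t 2 1 * ω t 0) t := by
    intro t
    have h := hdyn t 2 2
    have : (R t * hatMap (ω t)) 2 2 = R t 2 0 * ω t 1 - R t 2 1 * ω t 0 := by
      simp [hatMap, Matrix.mul_apply, Fin.sum_univ_three]
      ring
    rwa [this] at h
  have hg : ∀ t ≥ (0 : ℝ), c ≤ R t 2 2 → R t 2 0 * ω t 1 - R t 2 1 * ω t 0 ≤ 0 := by
    intro t ht hge
    have h1 := hcond t ht
    have h2 : e3 ⬝ᵥ (R t * hatMap e3) *ᵥ (ω t) = R t 2 1 * ω t 0 - R t 2 0 * ω t 1 := by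
      simp [e3, hatMap, dotProduct, mulVec, Matrix.mul_apply, Fin.sum_univ_three]
      ring
    have h3 : (0 : ℝ) ≤ α (e3 ⬝ᵥ (R t) *ᵥ e3 - c) := by
      rw [hf t, ← hα0]
      exact hα_mono.le_iff_le.mpr (by linarith)
    rw [h2] at h1
    linarith
  have key := sublevel_invariant (fun t => R t 2 2)
    (fun t => R t 2 0 * ω t 1 - R t 2 1 * ω t 0) c hderiv hg
    (by simpa using (hf 0 ▸ hinit))
  intro t ht
  rw [hf t]
  exact key t ht
end

section
/- Let α : ℝ → ℝ be a locally Lipschitz, strictly increasing function with α(0) = 0, and let h : ℝ → ℝ be differentiable with h'(t) ≥ −α(h(t)) for all t ≥ 0. If h(0) ≥ 0 then h(t) ≥ 0 for all t ≥ 0. -/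
/-- Comparison lemma for zeroing control barrier functions: if `h` is differentiable with
`h'(t) ≥ -α(h(t))` for all `t ≥ 0`, where `α` is a locally Lipschitz, strictly increasing
function with `α(0) = 0`, and `h(0) ≥ 0`, then `h(t) ≥ 0` for all `t ≥ 0`. -/
theorem stmt3
    (α : ℝ → ℝ) (hα_lip : LocallyLipschitz α) (hα_mono : StrictMono α) (hα0 : α 0 = 0)
    (h : ℝ → ℝ) (hdiff : Differentiable ℝ h)
    (hineq : ∀ t ≥ (0 : ℝ), deriv h t ≥ -α (h t))
    (h0 : h 0 ≥ 0) :
    ∀ t ≥ (0 : ℝ), h t ≥ 0 := by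
  intro t ht
  by_contra hneg
  push_neg at hneg
  set S : Set ℝ := {u | u ∈ Set.Icc 0 t ∧ 0 ≤ h u} with hS
  have h0S : (0 : ℝ) ∈ S := ⟨⟨le_refl 0, ht⟩, h0⟩
  have hSne : S.Nonempty := ⟨0, h0S⟩
  have hSbdd : BddAbove S := ⟨t, fun u hu => hu.1.2⟩
  have hclosed : IsClosed S := by
    have : S = Set.Icc 0 t ∩ h ⁻¹' Set.Ici 0 := rfl
    rw [this]
    exact isClosed_Icc.inter (IsClosed.preimage hdiff.continuous isClosed_Ici)
  have hsmem : sSup S ∈ S := hclosed.csSup_mem hSne hSbdd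
  set s := sSup S with hs
  have hst : s ≤ t := hsmem.1.2
  have hs0 : 0 ≤ s := hsmem.1.1
  have hslt : s < t := by
    rcases lt_or_eq_of_le hst with h' | h'
    · exact h'
    · exfalso; rw [h'] at hsmem; exact absurd hsmem.2 (not_le.mpr hneg)
  have hnegOn : ∀ u, s < u → u ≤ t → h u < 0 := by
    intro u hsu hut
    by_contra hc
    push_neg at hc
    have : u ∈ S := ⟨⟨le_trans hs0 hsu.le, hut⟩, hc⟩
    exact absurd (le_csSup hSbdd this) (not_le.mpr hsu)
  have hmono : MonotoneOn h (Set.Icc s t) := by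
    apply monotoneOn_of_deriv_nonneg (convex_Icc s t)
      hdiff.continuous.continuousOn
      (fun u _ => (hdiff u).differentiableWithinAt)
    intro u hu
    rw [interior_Icc] at hu
    have hu0 : (0 : ℝ) ≤ u := le_trans hs0 hu.1.le
    have hhu : h u < 0 := hnegOn u hu.1 hu.2.le
    have : α (h u) < 0 := hα0 ▸ hα_mono hhu
    linarith [hineq u hu0]
  have := hmono ⟨le_refl s, hst⟩ ⟨hst, le_refl t⟩ hst
  linarith [hsmem.2]
end
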